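/- Let Γ be a finite additive abelian group, κ a positive integer, and let 𝒦 denote the number of elements g ∈ Γ with κ·g = 0. Then for every subset X ⊆ Γ with |X| = x, the subgroup ⟨X⟩ generated by X satisfies |⟨X⟩| · 𝒦 ≤ |Γ| · κ^x. -/

import Mathlib

section Aux

variable {Γ : Type*} [AddCommGroup Γ] [Fintype Γ] [DecidableEq Γ]

/-- The `κ`-torsion subgroup. -/
def torsionSub (κ : ℕ) (Γ : Type*) [AddCommGroup Γ] : AddSubgroup Γ where
  carrier := {g | κ • g = 0}
  zero_mem' := by simp
  add_mem' := by
    intro a b ha hb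
    simp only [Set.mem_setOf_eq] at *
    rw [smul_add, ha, hb, add_zero]
  neg_mem' := by
    intro a ha
    simp only [Set.mem_setOf_eq] at *
    rw [smul_neg, ha, neg_zero]

lemma torsion_card_le (κ : ℕ) (hκ : 0 < κ) (H : Type*) [AddCommGroup H] [Finite H]
    (X : Finset H) (hX : AddSubgroup.closure (X : Set H) = ⊤) :
    Nat.card {h : H // κ • h = 0} ≤ κ ^ X.card := by
  classical
  haveI : NeZero κ := ⟨hκ.ne'⟩
  -- the multiplication-by-κ endomorphism
  let f : H →+ H :=
    { toFun := fun h => (κ : ℤ) • h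
      map_zero' := smul_zero _
      map_add' := fun a b => smul_add _ a b }
  -- kernel ≃ torsion
  have hker : Nat.card {h : H // κ • h = 0} = Nat.card f.ker := by
    apply Nat.card_congr
    exact Equiv.subtypeEquivRight (fun h => by
      simp [f, AddMonoidHom.mem_ker, natCast_zsmul])
  -- quotient by the range
  set N := f.range with hN
  set Q := H ⧸ N with hQdef
  -- |ker| = |Q|
  have e1 : Nat.card H = Nat.card Q * Nat.card N :=
    AddSubgroup.card_eq_card_quotient_mul_card_addSubgroup N
  have e2 : Nat.card H = Nat.card f.ker * Nat.card N := by
    have h1 : Nat.card H = Nat.card (H ⧸ f.ker) * Nat.card f.ker :=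
      AddSubgroup.card_eq_card_quotient_mul_card_addSubgroup f.ker
    have h2 : Nat.card (H ⧸ f.ker) = Nat.card N :=
      Nat.card_congr (QuotientAddGroup.quotientKerEquivRange f).toEquiv
    rw [h1, h2, mul_comm]
  have hNpos : 0 < Nat.card N := Nat.card_pos
  have eQ : Nat.card f.ker = Nat.card Q := by
    have := e1.symm.trans e2
    exact (Nat.eq_of_mul_eq_mul_right hNpos this).symm
  -- now bound |Q| by κ ^ |X|
  let π : H →+ Q := QuotientAddGroup.mk' N
  have hπsurj : Function.Surjective π := QuotientAddGroup.mk'_surjective N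
  have hqtor : ∀ h : H, (κ : ℤ) • (π h) = 0 := by
    intro h
    have h1 : (κ : ℤ) • (π h) = π ((κ : ℤ) • h) := (map_zsmul π _ h).symm
    rw [h1]
    have hmem : (κ : ℤ) • h ∈ N := ⟨h, rfl⟩
    exact (QuotientAddGroup.eq_zero_iff _).mpr hmem
  -- the surjection from (X → ZMod κ)
  let φ : (↥X → ZMod κ) →+ Q :=
    ∑ g : ↥X, (ZMod.lift κ ⟨zmultiplesHom Q (π g.1), by
        simpa [zmultiplesHom] using hqtor g.1⟩).comp
      (Pi.evalAddMonoidHom (fun _ : ↥X => ZMod κ) g)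
  have hsingle : ∀ g : ↥X, φ (Pi.single g 1) = π g.1 := by
    intro g
    have : φ (Pi.single g 1) =
        ∑ g' : ↥X, (ZMod.lift κ ⟨zmultiplesHom Q (π g'.1), by
          simpa [zmultiplesHom] using hqtor g'.1⟩) ((Pi.single g 1 : ↥X → ZMod κ) g') := by
      simp [φ, AddMonoidHom.finset_sum_apply]
    rw [this, Finset.sum_eq_single_of_mem g (Finset.mem_univ g)]
    · rw [Pi.single_eq_same]
      have h1 : ((1 : ZMod κ)) = ((1 : ℤ) : ZMod κ) := by push_cast; ring
      rw [h1, ZMod.lift_coe]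
      simp [zmultiplesHom]
    · intro b _ hb
      rw [Pi.single_eq_of_ne hb, map_zero]
  have hφsurj : Function.Surjective φ := by
    intro q
    obtain ⟨h, rfl⟩ := hπsurj q
    have hmem : h ∈ AddSubgroup.closure (X : Set H) := by rw [hX]; trivial
    have : π h ∈ φ.range := by
      induction hmem using AddSubgroup.closure_induction with
      | mem g hg => exact ⟨Pi.single (⟨g, hg⟩ : ↥X) 1, hsingle ⟨g, hg⟩⟩
      | zero => rw [map_zero]; exact zero_mem _
      | add a b _ _ ha hb => rw [map_add]; exact add_mem ha hb
      | neg a _ ha => rw [map_neg]; exact neg_mem ha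
    exact this
  have hcard : Nat.card Q ≤ Nat.card (↥X → ZMod κ) :=
    Nat.card_le_card_of_surjective φ hφsurj
  have hdom : Nat.card (↥X → ZMod κ) = κ ^ X.card := by
    rw [Nat.card_eq_fintype_card, Fintype.card_fun, ZMod.card, Fintype.card_coe]
  rw [hker, eQ]
  rw [hdom] at hcard
  exact hcard

end Aux

/-- Let `Γ` be a finite abelian group with `𝒦` elements of order `κ` (i.e. with
`κ • g = 0`). Then any subset `X ⊆ Γ` of cardinality `x` generates a subgroup of
order at most `|Γ| · κ^x / 𝒦`. -/
theorem stmt_7 (Γ : Type*) [AddCommGroup Γ] [Fintype Γ] [DecidableEq Γ]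
    (κ : ℕ) (hκ : 0 < κ) (X : Finset Γ) (x : ℕ) (hx : X.card = x) :
    Nat.card (AddSubgroup.closure (X : Set Γ)) *
      (Finset.univ.filter (fun g : Γ => κ • g = 0)).card ≤
    Fintype.card Γ * κ ^ x := by
  classical
  set H := AddSubgroup.closure (X : Set Γ) with hH
  set K := torsionSub κ Γ with hK
  -- identify the filter card with Nat.card K
  have hKcard : (Finset.univ.filter (fun g : Γ => κ • g = 0)).card = Nat.card K := by
    have e : Nat.card K = Nat.card {g : Γ // κ • g = 0} :=
      Nat.card_congr (Equiv.subtypeEquivRight fun g => Iff.rfl)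
    rw [e, Nat.card_eq_fintype_card, Fintype.card_subtype]
  -- Step (a): |H| * |K| ≤ |Γ| * |H ⊓ K|
  have stepA : Nat.card H * Nat.card K ≤ Fintype.card Γ * Nat.card (H ⊓ K : AddSubgroup Γ) := by
    have h1 : Nat.card H = K.relIndex H * Nat.card (K.addSubgroupOf H) :=
      AddSubgroup.card_eq_card_quotient_mul_card_addSubgroup (K.addSubgroupOf H)
    have h2 : Nat.card K * K.index = Fintype.card Γ := by
      rw [AddSubgroup.card_mul_index, Nat.card_eq_fintype_card]
    have h3 : K.relIndex H ∣ K.index := AddSubgroup.relIndex_dvd_index_of_normal K H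
    have h4 : K.relIndex H ≤ K.index :=
      Nat.le_of_dvd (Nat.pos_of_ne_zero (AddSubgroup.index_ne_zero_of_finite)) h3
    have h5 : Nat.card (K.addSubgroupOf H) = Nat.card (H ⊓ K : AddSubgroup Γ) := by
      apply Nat.card_congr
      have : (H ⊓ K).addSubgroupOf H = K.addSubgroupOf H := by
        rw [inf_comm]; exact AddSubgroup.inf_addSubgroupOf_right K H
      rw [← this]
      exact (AddSubgroup.addSubgroupOfEquivOfLe (inf_le_left : H ⊓ K ≤ H)).toEquiv
    calc Nat.card H * Nat.card K
        = K.relIndex H * Nat.card (K.addSubgroupOf H) * Nat.card K := by rw [← h1]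
      _ ≤ K.index * Nat.card (K.addSubgroupOf H) * Nat.card K := by
          exact Nat.mul_le_mul_right _ (Nat.mul_le_mul_right _ h4)
      _ = (Nat.card K * K.index) * Nat.card (K.addSubgroupOf H) := by ring
      _ = Fintype.card Γ * Nat.card (H ⊓ K : AddSubgroup Γ) := by rw [h2, h5]
  -- Step (b)+(c): |H ⊓ K| ≤ κ ^ x
  have stepB : Nat.card (H ⊓ K : AddSubgroup Γ) ≤ κ ^ x := by
    -- view H ⊓ K as torsion in H
    have hequiv : Nat.card (H ⊓ K : AddSubgroup Γ) = Nat.card {h : ↥H // κ • h = 0} := by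
      apply Nat.card_congr
      refine ⟨fun g => ⟨⟨g.1, (AddSubgroup.mem_inf.mp g.2).1⟩, ?_⟩,
        fun h => ⟨h.1.1, AddSubgroup.mem_inf.mpr ⟨h.1.2, ?_⟩⟩, fun g => rfl, fun h => rfl⟩
      · have hk : κ • (g : Γ) = 0 := (AddSubgroup.mem_inf.mp g.2).2
        ext
        simpa using hk
      · show κ • ((h.1 : ↥H) : Γ) = 0
        have h2 : ((κ • h.1 : ↥H) : Γ) = ((0 : ↥H) : Γ) := congrArg Subtype.val h.2
        rw [ZeroMemClass.coe_zero] at h2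
        exact h2
    rw [hequiv]
    -- X as a finset in H
    let X' : Finset ↥H := X.attach.map ⟨fun g => ⟨g.1, AddSubgroup.subset_closure g.2⟩,
      fun a b hab => Subtype.ext (by simpa using congrArg Subtype.val hab)⟩
    have hX'card : X'.card = x := by simp [X', hx]
    have hX'top : AddSubgroup.closure (X' : Set ↥H) = ⊤ := by
      have hco : ((↑) : ↥H → Γ) ⁻¹' (X : Set Γ) = (X' : Set ↥H) := by
        ext h
        simp only [Set.mem_preimage, Finset.coe_map, Set.mem_image, Finset.mem_coe, X']
        constructor
        · intro hh
          refine ⟨⟨h.1, by simpa using hh⟩, by simp, rfl⟩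
        · rintro ⟨g, -, rfl⟩
          exact g.2
      rw [← hco]
      exact AddSubgroup.closure_closure_coe_preimage
    have := torsion_card_le κ hκ ↥H X' hX'top
    rwa [hX'card] at this
  calc Nat.card H * (Finset.univ.filter (fun g : Γ => κ • g = 0)).card
      = Nat.card H * Nat.card K := by rw [hKcard]
    _ ≤ Fintype.card Γ * Nat.card (H ⊓ K : AddSubgroup Γ) := stepA
    _ ≤ Fintype.card Γ * κ ^ x := Nat.mul_le_mul_left _ stepB
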